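/- The function g(x) = f(x)^(1/x), where f(x) = (x^3 + 3x^2 + 2x + 2)/2, is (weakly) decreasing for x ≥ 1. -/

import Mathlib

/-- `f(x) = (x³ + 3x² + 2x + 2)/2`. -/
noncomputable def f (x : ℝ) : ℝ := (x ^ 3 + 3 * x ^ 2 + 2 * x + 2) / 2

/-- `g(x) = f(x)^(1/x)`. -/
noncomputable def g (x : ℝ) : ℝ := f x ^ (1 / x)

lemma f_ge {x : ℝ} (hx : 1 ≤ x) : 4 ≤ f x := by
  unfold f; nlinarith [sq_nonneg (x - 1), sq_nonneg x]

lemma f_pos {x : ℝ} (hx : 1 ≤ x) : 0 < f x := lt_of_lt_of_le (by norm_num) (f_ge hx)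

lemma hasDerivAt_f (x : ℝ) : HasDerivAt f ((3 * x ^ 2 + 6 * x + 2) / 2) x := by
  have h := (((hasDerivAt_pow 3 x).add
      (((hasDerivAt_pow 2 x).const_mul (3:ℝ)).add
        (((hasDerivAt_id x).const_mul (2:ℝ)).add (hasDerivAt_const x (2:ℝ))))).div_const 2)
  convert h using 1
  · rfl
  · rfl
  · funext y; simp [f]; ring
  · push_cast; norm_num; ring

lemma log4_gt : (1.3862943606 : ℝ) < Real.log 4 := by
  have h2 : Real.log 4 = 2 * Real.log 2 := by
    rw [show (4:ℝ) = 2 ^ 2 by norm_num, Real.log_pow]; push_cast; ring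
  have := Real.log_two_gt_d9
  linarith

lemma log4_lt : Real.log 4 < (1.3862943616 : ℝ) := by
  have h2 : Real.log 4 = 2 * Real.log 2 := by
    rw [show (4:ℝ) = 2 ^ 2 by norm_num, Real.log_pow]; push_cast; ring
  have := Real.log_two_lt_d9
  linarith

/-- key inequality: `x f'(x) ≤ f(x) log f(x)` for `x ≥ 1`. -/
lemma key {x : ℝ} (hx : 1 ≤ x) :
    x * ((3 * x ^ 2 + 6 * x + 2) / 2) ≤ f x * Real.log (f x) := by
  have hf4 : 4 ≤ f x := f_ge hx
  have hfpos : 0 < f x := f_pos hx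
  rcases le_or_gt x (5/2) with hle | hgt
  · -- log f ≥ log 4 + 1 - 4 / f
    have hlog : Real.log 4 + 1 - 4 / f x ≤ Real.log (f x) := by
      have h1 : Real.log (4 / f x) ≤ 4 / f x - 1 :=
        Real.log_le_sub_one_of_pos (by positivity)
      have h2 : Real.log (4 / f x) = Real.log 4 - Real.log (f x) :=
        Real.log_div (by norm_num) (ne_of_gt hfpos)
      have h3 : (4:ℝ) / f x ≤ 1 := by
        rw [div_le_one hfpos]; linarith
      linarith
    have hL1 := log4_gt
    have hL2 := log4_lt
    have hkey : x * ((3 * x ^ 2 + 6 * x + 2) / 2) ≤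
        f x * (Real.log 4 + 1 - 4 / f x) := by
      have hfx : f x * (4 / f x) = 4 := by field_simp
      have expand : f x * (Real.log 4 + 1 - 4 / f x)
          = f x * Real.log 4 + f x - 4 := by
        rw [mul_sub, mul_add, hfx]; ring
      rw [expand]
      unfold f
      nlinarith [sq_nonneg (x - 1), sq_nonneg (x - 5/2), mul_nonneg (sub_nonneg.2 hx) (sub_nonneg.2 hle), mul_nonneg (mul_nonneg (sub_nonneg.2 hx) (sub_nonneg.2 hx)) (sub_nonneg.2 hle)]
    calc x * ((3 * x ^ 2 + 6 * x + 2) / 2) ≤ f x * (Real.log 4 + 1 - 4 / f x) := hkey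
      _ ≤ f x * Real.log (f x) := by
          apply mul_le_mul_of_nonneg_left hlog (le_of_lt hfpos)
  · -- x > 5/2 so f x ≥ 20.6875 ≥ exp 3, so log f ≥ 3, and x f' ≤ 3 f
    have hf20 : (20.6875 : ℝ) ≤ f x := by
      unfold f; nlinarith [sq_nonneg (x - 5/2), sq_nonneg x]
    have hexp3 : Real.exp 3 ≤ 20.6875 := by
      have h1 : Real.exp 3 = Real.exp 1 ^ (3:ℕ) := by
        rw [← Real.exp_nat_mul]; norm_num
      have h2 := Real.exp_one_lt_d9
      have h0 : (0:ℝ) < Real.exp 1 := Real.exp_pos 1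
      have h3 : Real.exp 1 ^ (3:ℕ) < (2.7182818286:ℝ) ^ (3:ℕ) :=
        pow_lt_pow_left₀ h2 h0.le (by norm_num)
      rw [h1]
      nlinarith [h3]
    have hlog : (3:ℝ) ≤ Real.log (f x) := by
      rw [Real.le_log_iff_exp_le hfpos]
      linarith
    have h3f : x * ((3 * x ^ 2 + 6 * x + 2) / 2) ≤ 3 * f x := by
      unfold f; nlinarith [sq_nonneg x]
    calc x * ((3 * x ^ 2 + 6 * x + 2) / 2) ≤ 3 * f x := h3f
      _ ≤ f x * Real.log (f x) := by nlinarith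

lemma h_antitone : AntitoneOn (fun x => Real.log (f x) / x) (Set.Ici (1 : ℝ)) := by
  have hderiv : ∀ x ∈ Set.Ioi (1:ℝ), HasDerivAt (fun x => Real.log (f x) / x)
      (((3 * x ^ 2 + 6 * x + 2) / 2 / f x * x - Real.log (f x) * 1) / x ^ 2) x := by
    intro x hx
    have hx1 : (1:ℝ) ≤ x := le_of_lt hx
    have hfx : f x ≠ 0 := ne_of_gt (f_pos hx1)
    have hxne : x ≠ 0 := by positivity
    exact ((hasDerivAt_f x).log hfx).div (hasDerivAt_id x) hxne
  apply antitoneOn_of_deriv_nonpos (convex_Ici 1)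
  · apply ContinuousOn.div
    · exact (Real.continuousOn_log.comp (Continuous.continuousOn (by unfold f; continuity))
        (fun x hx => ne_of_gt (f_pos hx)))
    · exact continuousOn_id
    · intro x hx; have : (1:ℝ) ≤ x := hx; positivity
  · rw [interior_Ici]
    intro x hx
    exact (hderiv x hx).differentiableAt.differentiableWithinAt
  · rw [interior_Ici]
    intro x hx
    rw [(hderiv x hx).deriv]
    have hx1 : (1:ℝ) ≤ x := le_of_lt hx
    have hfpos := f_pos hx1
    have hx0 : (0:ℝ) < x := by linarith
    apply div_nonpos_of_nonpos_of_nonneg _ (sq_nonneg x)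
    have hk := key hx1
    have : (3 * x ^ 2 + 6 * x + 2) / 2 / f x * x ≤ Real.log (f x) := by
      rw [div_mul_eq_mul_div, div_le_iff₀ hfpos]
      nlinarith
    linarith

/-- `g` is weakly decreasing on `[1, ∞)`. -/
theorem g_antitone : AntitoneOn g (Set.Ici (1 : ℝ)) := by
  intro a ha b hb hab
  have ha1 : (1:ℝ) ≤ a := ha
  have hb1 : (1:ℝ) ≤ b := hb
  have hga : g a = Real.exp (Real.log (f a) / a) := by
    rw [g, Real.rpow_def_of_pos (f_pos ha1)]
    ring_nf
  have hgb : g b = Real.exp (Real.log (f b) / b) := by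
    rw [g, Real.rpow_def_of_pos (f_pos hb1)]
    ring_nf
  rw [hga, hgb]
  exact Real.exp_le_exp.2 (h_antitone ha hb hab)
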